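/- Let (G,B,m,w) be a connected weighted finite graph with boundary such that: (1) B = {x₀, x₁} has exactly two vertices and m_{x₀} = m_{x₁} = m₀; (2) there is a unique path P : v₀ = x₀ ∼ v₁ ∼ ⋯ ∼ v_{d_B} = x₁ in G joining x₀ and x₁, its length is d_B, and w_{v_{i−1}v_i} = w₀ for i = 1, …, d_B; (3) G is a comb over P. Then equality σ₂ = w₀·V_B / ((V_B − m₀)² · d_B) holds. -/

import Mathlib

open Finset

variable {V : Type*}

/-- The Dirichlet energy `⟨du,du⟩ = ∑_{{x,y}∈E} (u y - u x)^2 w_{xy}` of a function `u`,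
where the edge weight `w` is symmetric and vanishes on non-adjacent pairs. -/
noncomputable def energy [Fintype V] (w : V → V → ℝ) (u : V → ℝ) : ℝ :=
  (1 / 2) * ∑ x, ∑ y, (u y - u x) ^ 2 * w x y

/-- The Dirichlet pairing `⟨du,dv⟩ = ∑_{{x,y}∈E} (u y - u x)(v y - v x) w_{xy}`. -/
noncomputable def dirPairing [Fintype V] (w : V → V → ℝ) (u v : V → ℝ) : ℝ :=
  (1 / 2) * ∑ x, ∑ y, (u y - u x) * (v y - v x) * w x y

/-- The weighted graph Laplacian `Δu(x) = (1/m_x) ∑_y (u y - u x) w_{xy}`. -/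
noncomputable def glap [Fintype V] (m : V → ℝ) (w : V → V → ℝ) (u : V → ℝ) (x : V) : ℝ :=
  (1 / m x) * ∑ y, (u y - u x) * w x y

/-- `d_B`, the maximal graph distance between two boundary vertices. -/
noncomputable def boundaryDiam (G : SimpleGraph V) (B : Finset V) : ℕ :=
  (B ×ˢ B).sup fun p => G.dist p.1 p.2

/-- `w₀`, the minimal edge weight. -/
noncomputable def minEdgeWeight (G : SimpleGraph V) (w : V → V → ℝ) : ℝ :=
  sInf {r : ℝ | ∃ x y, G.Adj x y ∧ w x y = r}

/-- `m₀`, the minimal vertex measure on the boundary. -/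
noncomputable def minBoundaryMeasure (B : Finset V) (m : V → ℝ) : ℝ :=
  sInf {r : ℝ | ∃ x ∈ B, m x = r}

/-- The second Steklov eigenvalue `σ₂`, via its variational characterization: the infimum of
the Rayleigh quotients `E(u)/⟨u,u⟩_B` over functions `u` on `V` whose boundary values are
nonzero and have weighted mean zero.  (Since the harmonic extension minimizes the Dirichlet
energy among all extensions of given boundary data, this agrees with the second eigenvalue of
the Steklov operator.) -/
noncomputable def sigma2 [Fintype V] (B : Finset V) (m : V → ℝ) (w : V → V → ℝ) : ℝ :=
  sInf {r : ℝ | ∃ u : V → ℝ, (∃ x ∈ B, u x ≠ 0) ∧ (∑ x ∈ B, u x * m x = 0) ∧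
    r = energy w u / ∑ x ∈ B, (u x) ^ 2 * m x}

section AuxLemmas

open SimpleGraph

variable {V : Type*} {G : SimpleGraph V}

lemma walk_darts_sum (u : V → ℝ) {a b : V} (q : G.Walk a b) :
    (q.darts.map (fun d => u d.toProd.2 - u d.toProd.1)).sum = u b - u a := by
  induction q with
  | nil => simp
  | cons h q ih =>
    simp only [SimpleGraph.Walk.darts_cons, List.map_cons, List.sum_cons, ih]
    ring

lemma indexOf_support_end [DecidableEq V] {a b : V} (q : G.Walk a b) (hq : q.IsPath) :
    q.support.idxOf b = q.length := by
  induction q with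
  | nil => simp
  | @cons a c b h q ih =>
    rw [SimpleGraph.Walk.cons_isPath_iff] at hq
    have hab : a ≠ b := fun hh => hq.2 (hh ▸ q.end_mem_support)
    rw [SimpleGraph.Walk.support_cons, List.idxOf_cons_ne _ hab, ih hq.1,
      SimpleGraph.Walk.length_cons]

lemma indexOf_dart [DecidableEq V] {a b : V} (q : G.Walk a b) (hq : q.IsPath) :
    ∀ d ∈ q.darts, q.support.idxOf d.toProd.2 = q.support.idxOf d.toProd.1 + 1 := by
  induction q with
  | nil => simp
  | @cons a c b h q ih =>
    rw [SimpleGraph.Walk.cons_isPath_iff] at hq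
    intro d hd
    rw [SimpleGraph.Walk.darts_cons, List.mem_cons] at hd
    rcases hd with rfl | hd
    · simp only [SimpleGraph.Walk.support_cons]
      rw [List.idxOf_cons_self, List.idxOf_cons_ne _ h.ne,
        q.support_eq_cons, List.idxOf_cons_self]
    · have h1 : d.toProd.1 ∈ q.support := q.dart_fst_mem_support_of_mem_darts hd
      have h2 : d.toProd.2 ∈ q.support := q.dart_snd_mem_support_of_mem_darts hd
      have ha1 : a ≠ d.toProd.1 := fun hh => hq.2 (hh ▸ h1)
      have ha2 : a ≠ d.toProd.2 := fun hh => hq.2 (hh ▸ h2)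
      rw [SimpleGraph.Walk.support_cons, List.idxOf_cons_ne _ ha1,
        List.idxOf_cons_ne _ ha2, ih hq.1 d hd]

lemma exists_root (hG : G.Connected) {x₀ x₁ : V} (p : G.Walk x₀ x₁) (v : V) :
    ∃ x ∈ p.support, (G.deleteEdges {e | e ∈ p.edges}).Reachable x v := by
  have key : ∀ {a b : V} (_ : G.Walk a b),
      (∃ x ∈ p.support, (G.deleteEdges {e | e ∈ p.edges}).Reachable x a) →
      (∃ x ∈ p.support, (G.deleteEdges {e | e ∈ p.edges}).Reachable x b) := by
    intro a b q
    induction q with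
    | nil => exact id
    | @cons a c b h q ih =>
      intro ha
      apply ih
      by_cases hmem : s(a, c) ∈ p.edges
      · exact ⟨c, p.snd_mem_support_of_mem_edges hmem, SimpleGraph.Reachable.refl c⟩
      · obtain ⟨x, hx, hr⟩ := ha
        exact ⟨x, hx, hr.trans (SimpleGraph.Adj.reachable (by
          rw [SimpleGraph.deleteEdges_adj]; exact ⟨h, hmem⟩))⟩
  obtain ⟨q⟩ := hG.preconnected x₀ v
  exact key q ⟨x₀, p.start_mem_support, SimpleGraph.Reachable.refl x₀⟩

end AuxLemmas

section EnergyLemmas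

open SimpleGraph Finset

variable {V : Type*} {G : SimpleGraph V}

lemma energy_split [Fintype V] [DecidableEq V] (w : V → V → ℝ)
    (hw_symm : ∀ x y, w x y = w y x) {x₀ x₁ : V} (p : G.Walk x₀ x₁) (hp : p.IsPath)
    (u : V → ℝ) :
    energy w u =
      (p.darts.map
        (fun d => (u d.toProd.2 - u d.toProd.1) ^ 2 * w d.toProd.1 d.toProd.2)).sum
      + (1/2) * ∑ q ∈ (Finset.univ ×ˢ Finset.univ) \
          ((p.darts.map SimpleGraph.Dart.toProd).toFinset ∪
           (p.darts.map (Prod.swap ∘ SimpleGraph.Dart.toProd)).toFinset),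
          (u q.2 - u q.1) ^ 2 * w q.1 q.2 := by
  set F : V × V → ℝ := fun q => (u q.2 - u q.1) ^ 2 * w q.1 q.2 with hF
  have hnd : p.darts.Nodup := SimpleGraph.Walk.darts_nodup_of_support_nodup hp.support_nodup
  have hnd1 : (p.darts.map SimpleGraph.Dart.toProd).Nodup :=
    hnd.map SimpleGraph.Dart.toProd_injective
  have hnd2 : (p.darts.map (Prod.swap ∘ SimpleGraph.Dart.toProd)).Nodup :=
    hnd.map (Prod.swap_injective.comp SimpleGraph.Dart.toProd_injective)
  set L₁ := (p.darts.map SimpleGraph.Dart.toProd).toFinset with hL₁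
  set L₂ := (p.darts.map (Prod.swap ∘ SimpleGraph.Dart.toProd)).toFinset with hL₂
  have hedgesnd : (p.darts.map SimpleGraph.Dart.edge).Nodup := hp.edges_nodup
  have hdisj : Disjoint L₁ L₂ := by
    rw [Finset.disjoint_left]
    intro q hq1 hq2
    rw [hL₁, List.mem_toFinset, List.mem_map] at hq1
    rw [hL₂, List.mem_toFinset, List.mem_map] at hq2
    obtain ⟨d1, hd1, rfl⟩ := hq1
    obtain ⟨d2, hd2, he⟩ := hq2
    have hedge : d2.edge = d1.edge := by
      rw [SimpleGraph.Dart.edge, SimpleGraph.Dart.edge, ← he]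
      exact (Sym2.mk_prod_swap_eq).symm
    have : d2 = d1 :=
      List.inj_on_of_nodup_map hedgesnd hd2 hd1 hedge
    subst this
    have : d2.toProd.1 = d2.toProd.2 := congrArg Prod.fst he.symm
    exact d2.adj.ne this
  have hsub : L₁ ∪ L₂ ⊆ Finset.univ ×ˢ Finset.univ := by
    intro q _; simp [Finset.mem_product]
  have e1 : energy w u = (1/2) * ∑ q ∈ Finset.univ ×ˢ Finset.univ, F q := by
    rw [energy, Finset.sum_product]
  have e2 : ∑ q ∈ Finset.univ ×ˢ Finset.univ, F q =
      (∑ q ∈ (Finset.univ ×ˢ Finset.univ) \ (L₁ ∪ L₂), F q) + ∑ q ∈ L₁ ∪ L₂, F q :=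
    (Finset.sum_sdiff hsub).symm
  have e3 : ∑ q ∈ L₁ ∪ L₂, F q = (∑ q ∈ L₁, F q) + ∑ q ∈ L₂, F q :=
    Finset.sum_union hdisj
  have e4 : ∑ q ∈ L₁, F q = (p.darts.map (fun d => F d.toProd)).sum := by
    rw [hL₁, List.sum_toFinset F hnd1, List.map_map]
    rfl
  have e5 : ∑ q ∈ L₂, F q = (p.darts.map (fun d => F d.toProd)).sum := by
    rw [hL₂, List.sum_toFinset F hnd2, List.map_map]
    congr 1
    apply List.map_congr_left
    intro d _
    show F d.toProd.swap = F d.toProd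
    simp only [hF, Prod.fst_swap, Prod.snd_swap]
    rw [hw_symm]
    ring
  have e6 : (p.darts.map (fun d => F d.toProd)).sum =
      (p.darts.map
        (fun d => (u d.toProd.2 - u d.toProd.1) ^ 2 * w d.toProd.1 d.toProd.2)).sum := rfl
  rw [e1, e2, e3, e4, e5, e6]
  ring

end EnergyLemmas

section MainProof

open SimpleGraph Finset

/-- **Converse of the rigidity theorem.**
If a connected weighted finite graph with boundary satisfies: (1) `B = {x₀, x₁}` with two
vertices of equal measure; (2) there is a unique path `p` joining `x₀` to `x₁`, of length
`d_B`, all of whose edge weights equal `w₀`; (3) `G` is a comb over `p`; then equality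
`σ₂ = w₀ V_B / ((V_B - m₀)² d_B)` holds. -/
theorem extended_perrin_rigidity_converse [Fintype V] [DecidableEq V]
    (G : SimpleGraph V) (hG : G.Connected)
    (B : Finset V)
    (m : V → ℝ) (w : V → V → ℝ)
    (hm : ∀ x, 0 < m x)
    (hw_symm : ∀ x y, w x y = w y x)
    (hw_pos : ∀ x y, G.Adj x y → 0 < w x y)
    (hw_zero : ∀ x y, ¬ G.Adj x y → w x y = 0)
    (x₀ x₁ : V) (hne : x₀ ≠ x₁) (hBeq : B = {x₀, x₁}) (hmeq : m x₀ = m x₁)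
    (p : G.Walk x₀ x₁) (hp : p.IsPath) (hlen : p.length = boundaryDiam G B)
    (hpw : ∀ d ∈ p.darts, w d.toProd.1 d.toProd.2 = minEdgeWeight G w)
    (huniq : ∀ q : G.Walk x₀ x₁, q.IsPath → q = p)
    (hcomb : ∀ x ∈ p.support, ∀ y ∈ p.support, x ≠ y →
      ¬ (G.deleteEdges {e | e ∈ p.edges}).Reachable x y) :
    sigma2 B m w =
      minEdgeWeight G w * (∑ x ∈ B, m x) /
        (((∑ x ∈ B, m x) - minBoundaryMeasure B m) ^ 2 * (boundaryDiam G B : ℝ)) := by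
  classical
  have hMpos : 0 < m x₀ := hm x₀
  set M := m x₀ with hMdef
  have hM0 : M ≠ 0 := ne_of_gt hMpos
  have hd0 : p.length ≠ 0 := fun h => hne (SimpleGraph.Walk.eq_of_length_eq_zero h)
  have hdpos : 0 < p.length := Nat.pos_of_ne_zero hd0
  have hdR : (0:ℝ) < (p.length : ℝ) := by exact_mod_cast hdpos
  have hdne : (p.length : ℝ) ≠ 0 := ne_of_gt hdR
  set w0 := minEdgeWeight G w with hw0def
  have hdartsne : p.darts ≠ [] := by
    intro h
    rw [← SimpleGraph.Walk.length_darts, h] at hdpos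
    simp at hdpos
  obtain ⟨d₀, hd₀mem⟩ := List.exists_mem_of_ne_nil _ hdartsne
  have hw0pos : 0 < w0 := by rw [← hpw d₀ hd₀mem]; exact hw_pos _ _ d₀.adj
  have hwnn : ∀ x y, 0 ≤ w x y := by
    intro x y
    by_cases h : G.Adj x y
    · exact (hw_pos x y h).le
    · exact (hw_zero x y h).ge
  have hBsum : ∀ f : V → ℝ, ∑ x ∈ B, f x = f x₀ + f x₁ := by
    intro f; rw [hBeq]; exact Finset.sum_pair hne
  have hmB : minBoundaryMeasure B m = M := by
    have hset : {r : ℝ | ∃ x ∈ B, m x = r} = {M} := by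
      ext r
      simp only [hBeq, Finset.mem_insert, Finset.mem_singleton, Set.mem_setOf_eq,
        Set.mem_singleton_iff]
      constructor
      · rintro ⟨x, hx | hx, rfl⟩ <;> subst hx
        · rfl
        · exact hmeq.symm
      · rintro rfl; exact ⟨x₀, Or.inl rfl, rfl⟩
    rw [minBoundaryMeasure, hset, csInf_singleton]
  have hVB : ∑ x ∈ B, m x = 2 * M := by rw [hBsum m, ← hmeq]; ring
  set c : ℝ := 2 * w0 / (M * (p.length : ℝ)) with hcdef
  -- the root map
  have hroot := fun v => exists_root hG p v
  choose cmap hc1 hc2 using hroot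
  have huniqroot : ∀ v x, x ∈ p.support →
      (G.deleteEdges {e | e ∈ p.edges}).Reachable x v → cmap v = x := by
    intro v x hx hr
    by_contra hne'
    exact hcomb _ (hc1 v) x hx hne' ((hc2 v).trans hr.symm)
  have hcfix : ∀ x ∈ p.support, cmap x = x := fun x hx =>
    huniqroot x x hx (SimpleGraph.Reachable.refl x)
  -- the test function
  set u : V → ℝ := fun v => 2 * (p.support.idxOf (cmap v) : ℝ) / (p.length : ℝ) - 1
    with hudef
  have hidx0 : p.support.idxOf x₀ = 0 := by
    conv_lhs => rw [p.support_eq_cons]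
    exact List.idxOf_cons_self
  have hux₀ : u x₀ = -1 := by
    simp only [hudef]
    rw [hcfix x₀ p.start_mem_support, hidx0]
    simp
  have hux₁ : u x₁ = 1 := by
    simp only [hudef]
    rw [hcfix x₁ p.end_mem_support, indexOf_support_end p hp, mul_div_assoc,
      div_self hdne]
    norm_num
  have hflat : ∀ x y, G.Adj x y → s(x,y) ∉ p.edges → u x = u y := by
    intro x y hadj hnotin
    have hr : (G.deleteEdges {e | e ∈ p.edges}).Reachable x y :=
      SimpleGraph.Adj.reachable (by rw [SimpleGraph.deleteEdges_adj]; exact ⟨hadj, hnotin⟩)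
    have hcc : cmap x = cmap y :=
      (huniqroot y (cmap x) (hc1 x) ((hc2 x).trans hr)).symm
    simp only [hudef, hcc]
  have hdart : ∀ dd ∈ p.darts,
      u dd.toProd.2 - u dd.toProd.1 = 2 / (p.length : ℝ) := by
    intro dd hdd
    have h1 := p.dart_fst_mem_support_of_mem_darts hdd
    have h2 := p.dart_snd_mem_support_of_mem_darts hdd
    have hidx := indexOf_dart p hp dd hdd
    simp only [hudef]
    rw [hcfix _ h2, hcfix _ h1, hidx]
    push_cast
    field_simp
    ring
  -- nodup facts
  have hndup : p.darts.Nodup :=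
    SimpleGraph.Walk.darts_nodup_of_support_nodup hp.support_nodup
  set t := p.darts.toFinset with htdef
  have hcard : t.card = p.length := by
    rw [htdef, List.toFinset_card_of_nodup hndup, p.length_darts]
  have hLsum : ∀ g : G.Dart → ℝ, (p.darts.map g).sum = ∑ dd ∈ t, g dd := fun g =>
    (List.sum_toFinset g hndup).symm
  -- energy of the test function
  have hE : energy w u = 4 * w0 / (p.length : ℝ) := by
    rw [energy_split w hw_symm p hp u]
    have hrest : ∑ q ∈ (Finset.univ ×ˢ Finset.univ) \
          ((p.darts.map SimpleGraph.Dart.toProd).toFinset ∪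
           (p.darts.map (Prod.swap ∘ SimpleGraph.Dart.toProd)).toFinset),
          (u q.2 - u q.1) ^ 2 * w q.1 q.2 = 0 := by
      apply Finset.sum_eq_zero
      intro q hq
      rw [Finset.mem_sdiff, Finset.mem_union] at hq
      have hqL := hq.2
      by_cases hadj : G.Adj q.1 q.2
      · by_cases hmem : s(q.1, q.2) ∈ p.edges
        · exfalso
          rw [SimpleGraph.Walk.edges, List.mem_map] at hmem
          obtain ⟨dd, hdd, hedge⟩ := hmem
          rw [SimpleGraph.dart_edge_eq_mk'_iff] at hedge
          apply hqL
          rcases hedge with hedge | hedge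
          · left
            rw [List.mem_toFinset, List.mem_map]
            exact ⟨dd, hdd, by rw [hedge]⟩
          · right
            rw [List.mem_toFinset, List.mem_map]
            refine ⟨dd, hdd, ?_⟩
            show dd.toProd.swap = q
            rw [hedge]
            exact Prod.swap_swap _
        · rw [hflat q.1 q.2 hadj hmem]
          ring
      · rw [hw_zero _ _ hadj]
        ring
    rw [hrest, hLsum]
    have : ∑ dd ∈ t, (u dd.toProd.2 - u dd.toProd.1) ^ 2 * w dd.toProd.1 dd.toProd.2 =
        ∑ _dd ∈ t, (2 / (p.length : ℝ)) ^ 2 * w0 := by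
      apply Finset.sum_congr rfl
      intro dd hdd
      rw [hdart dd (List.mem_toFinset.mp hdd), hpw dd (List.mem_toFinset.mp hdd)]
    rw [this, Finset.sum_const, hcard, nsmul_eq_mul]
    field_simp
    ring
  have hDenu : ∑ x ∈ B, (u x) ^ 2 * m x = 2 * M := by
    rw [hBsum fun x => (u x) ^ 2 * m x, hux₀, hux₁, ← hmeq]
    ring
  -- membership of c
  have hmemS : ∃ v : V → ℝ, (∃ x ∈ B, v x ≠ 0) ∧ (∑ x ∈ B, v x * m x = 0) ∧
      c = energy w v / ∑ x ∈ B, (v x) ^ 2 * m x := by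
    refine ⟨u, ⟨x₀, by rw [hBeq]; exact Finset.mem_insert_self _ _,
      by rw [hux₀]; norm_num⟩, ?_, ?_⟩
    · rw [hBsum fun x => u x * m x, hux₀, hux₁, ← hmeq]
      ring
    · rw [hE, hDenu, hcdef]
      field_simp
      ring
  -- lower bound
  have hlb : ∀ r ∈ {r : ℝ | ∃ v : V → ℝ, (∃ x ∈ B, v x ≠ 0) ∧
      (∑ x ∈ B, v x * m x = 0) ∧ r = energy w v / ∑ x ∈ B, (v x) ^ 2 * m x}, c ≤ r := by
    rintro r ⟨v, ⟨x, hxB, hx0⟩, hmean, rfl⟩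
    rw [hBsum fun x => v x * m x, ← hmeq] at hmean
    have hv1 : v x₁ = - v x₀ := by
      have hfac : (v x₀ + v x₁) * M = 0 := by  linarith [hmean]
      rcases mul_eq_zero.mp hfac with h | h
      · linarith
      · exact absurd h hM0
    have hv0 : v x₀ ≠ 0 := by
      rw [hBeq, Finset.mem_insert, Finset.mem_singleton] at hxB
      rcases hxB with rfl | rfl
      · exact hx0
      · intro h0; apply hx0; rw [hv1, h0, neg_zero]
    have hsq : 0 < v x₀ ^ 2 := (sq_nonneg _).lt_of_ne (Ne.symm (pow_ne_zero 2 hv0))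
    have hD : ∑ x ∈ B, (v x) ^ 2 * m x = 2 * v x₀ ^ 2 * M := by
      rw [hBsum fun x => (v x) ^ 2 * m x, hv1, ← hmeq]
      ring
    have hDpos : 0 < ∑ x ∈ B, (v x) ^ 2 * m x := by
      rw [hD]; positivity
    have htel : ∑ dd ∈ t, (v dd.toProd.2 - v dd.toProd.1) = v x₁ - v x₀ := by
      rw [← hLsum]; exact walk_darts_sum v p
    have hCS : (v x₁ - v x₀) ^ 2 ≤
        (p.length : ℝ) * ∑ dd ∈ t, (v dd.toProd.2 - v dd.toProd.1) ^ 2 := by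
      rw [← htel]
      have h := sq_sum_le_card_mul_sum_sq
        (s := t) (f := fun dd => v dd.toProd.2 - v dd.toProd.1)
      rw [hcard] at h
      exact h
    have hEle : w0 * (v x₁ - v x₀) ^ 2 / (p.length : ℝ) ≤ energy w v := by
      rw [energy_split w hw_symm p hp v]
      have hrest : 0 ≤ (1/2 : ℝ) * ∑ q ∈ (Finset.univ ×ˢ Finset.univ) \
          ((p.darts.map SimpleGraph.Dart.toProd).toFinset ∪
           (p.darts.map (Prod.swap ∘ SimpleGraph.Dart.toProd)).toFinset),
          (v q.2 - v q.1) ^ 2 * w q.1 q.2 := by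
        apply mul_nonneg (by norm_num)
        apply Finset.sum_nonneg
        intro q _
        exact mul_nonneg (sq_nonneg _) (hwnn _ _)
      have hmain : w0 * (v x₁ - v x₀) ^ 2 / (p.length : ℝ) ≤
          (p.darts.map
            (fun dd => (v dd.toProd.2 - v dd.toProd.1) ^ 2 * w dd.toProd.1 dd.toProd.2)).sum := by
        rw [hLsum]
        have hw0sum : ∑ dd ∈ t,
            (v dd.toProd.2 - v dd.toProd.1) ^ 2 * w dd.toProd.1 dd.toProd.2 =
            w0 * ∑ dd ∈ t, (v dd.toProd.2 - v dd.toProd.1) ^ 2 := by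
          rw [Finset.mul_sum]
          apply Finset.sum_congr rfl
          intro dd hdd
          rw [hpw dd (List.mem_toFinset.mp hdd)]
          ring
        rw [hw0sum, div_le_iff₀ hdR]
        calc w0 * (v x₁ - v x₀) ^ 2
            ≤ w0 * ((p.length : ℝ) * ∑ dd ∈ t, (v dd.toProd.2 - v dd.toProd.1) ^ 2) :=
              mul_le_mul_of_nonneg_left hCS hw0pos.le
          _ = w0 * (∑ dd ∈ t, (v dd.toProd.2 - v dd.toProd.1) ^ 2) * (p.length : ℝ) := by
              ring
      linarith
    have hD2pos : 0 < 2 * v x₀ ^ 2 * M := by positivity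
    have hkey : 2 * w0 / (M * (p.length : ℝ)) * (2 * v x₀ ^ 2 * M) =
        w0 * (v x₁ - v x₀) ^ 2 / (p.length : ℝ) := by
      rw [hv1]
      field_simp
      ring
    rw [hD, le_div_iff₀ hD2pos, hkey]
    exact hEle
  -- conclude
  have hSne : Set.Nonempty {r : ℝ | ∃ v : V → ℝ, (∃ x ∈ B, v x ≠ 0) ∧
      (∑ x ∈ B, v x * m x = 0) ∧ r = energy w v / ∑ x ∈ B, (v x) ^ 2 * m x} := ⟨c, hmemS⟩
  have hbdd : BddBelow {r : ℝ | ∃ v : V → ℝ, (∃ x ∈ B, v x ≠ 0) ∧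
      (∑ x ∈ B, v x * m x = 0) ∧ r = energy w v / ∑ x ∈ B, (v x) ^ 2 * m x} :=
    ⟨c, fun r hr => hlb r hr⟩
  have hRHS : w0 * (∑ x ∈ B, m x) /
      (((∑ x ∈ B, m x) - minBoundaryMeasure B m) ^ 2 * (boundaryDiam G B : ℝ)) = c := by
    rw [hVB, hmB, ← hlen, hcdef]
    have h2MM : 2 * M - M = M := by ring
    rw [h2MM]
    field_simp
  rw [hRHS, sigma2]
  exact le_antisymm (csInf_le hbdd hmemS) (le_csInf hSne hlb)

end MainProof
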